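/- Under the hypotheses of the component preserving theorem, if in addition each sigma_i is a maximal green sequence for hat{Q_i} (every mutation occurs at a green vertex), then the component preserving shuffle tau is a maximal green sequence for hat{Q}. -/

import Mathlib

/-- Fomin–Zelevinsky matrix mutation at index `k`. -/
def mutB {V : Type*} [DecidableEq V] (k : V) (B : V → V → ℤ) : V → V → ℤ :=
  fun i j =>
    if i = k ∨ j = k then -B i j
    else B i j + Int.sign (B i k) * max (B i k * B k j) 0

/-- Apply a sequence of mutations (left to right). -/
def mutSeq {V : Type*} [DecidableEq V] (σ : List V) (B : V → V → ℤ) : V → V → ℤ :=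
  σ.foldl (fun M k => mutB k M) B

/-- The framed quiver of `B`: mutable vertices `Sum.inl`, frozen vertices `Sum.inr`. -/
def framed {V : Type*} [DecidableEq V] (B : V → V → ℤ) : (V ⊕ V) → (V ⊕ V) → ℤ
  | Sum.inl i, Sum.inl j => B i j
  | Sum.inl i, Sum.inr j => if i = j then 1 else 0
  | Sum.inr i, Sum.inl j => if i = j then -1 else 0
  | Sum.inr _, Sum.inr _ => 0

/-- Apply a sequence of mutations at mutable vertices to an ice matrix on `V ⊕ V`. -/
def mutFr {V : Type*} [DecidableEq V] (σ : List V) (M : (V ⊕ V) → (V ⊕ V) → ℤ) :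
    (V ⊕ V) → (V ⊕ V) → ℤ :=
  σ.foldl (fun N k => mutB (Sum.inl k) N) M

/-- A mutable vertex is green if no frozen vertex has an arrow into it. -/
def IsGreen {V : Type*} (M : (V ⊕ V) → (V ⊕ V) → ℤ) (v : V) : Prop :=
  ∀ f, 0 ≤ M (Sum.inl v) (Sum.inr f)

/-- A mutable vertex is red if it has no arrows to frozen vertices. -/
def IsRed {V : Type*} (M : (V ⊕ V) → (V ⊕ V) → ℤ) (v : V) : Prop :=
  ∀ f, M (Sum.inl v) (Sum.inr f) ≤ 0

/-- A reddening sequence: after mutating the framed quiver, all mutable vertices are red. -/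
def IsRedSeq {V : Type*} [DecidableEq V] (B : V → V → ℤ) (σ : List V) : Prop :=
  ∀ v, IsRed (mutFr σ (framed B)) v

/-- A maximal green sequence: a reddening sequence each of whose mutations is at a green vertex. -/
def IsMGS {V : Type*} [DecidableEq V] (B : V → V → ℤ) (σ : List V) : Prop :=
  IsRedSeq B σ ∧ ∀ t (h : t < σ.length), IsGreen (mutFr (σ.take t) (framed B)) (σ[t]'h)

/-- A mutable vertex `k` is component preserving with respect to the block map `π`. -/
def CompPres {V ι : Type*} (π : V → ι) (M : (V ⊕ V) → (V ⊕ V) → ℤ) (k : V) : Prop :=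
  ((∃ f, 0 < M (Sum.inl k) (Sum.inr f)) →
    ∀ a, 0 < M (Sum.inl a) (Sum.inl k) → π a = π k) ∧
  ((∃ f, M (Sum.inl k) (Sum.inr f) < 0) →
    ∀ a, 0 < M (Sum.inl k) (Sum.inl a) → π a = π k)

/-- Every step of the sequence mutates at a component preserving vertex. -/
def CompPresSeq {V ι : Type*} [DecidableEq V] (π : V → ι) (σ : List V)
    (M : (V ⊕ V) → (V ⊕ V) → ℤ) : Prop :=
  ∀ t (h : t < σ.length), CompPres π (mutFr (σ.take t) M) (σ[t]'h)

lemma sign_mul_max_of_nonneg (x c : ℤ) (hc : 0 ≤ c) :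
    Int.sign x * max (x * c) 0 = max x 0 * c := by
  rcases lt_trichotomy x 0 with h | h | h
  · rw [Int.sign_eq_neg_one_of_neg h, max_eq_right (by nlinarith), max_eq_right h.le]; ring
  · subst h; simp
  · rw [Int.sign_eq_one_of_pos h, max_eq_left (by positivity), max_eq_left h.le]; ring

lemma sign_mul_max_comm (x y : ℤ) :
    Int.sign y * max (x * y) 0 = Int.sign x * max (x * y) 0 := by
  rcases le_or_gt (x * y) 0 with h | h
  · rw [max_eq_right h]; ring
  · rcases lt_trichotomy x 0 with hx | hx | hx
    · have hy : y < 0 := by nlinarith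
      rw [Int.sign_eq_neg_one_of_neg hx, Int.sign_eq_neg_one_of_neg hy]
    · simp [hx] at h
    · have hy : 0 < y := by nlinarith
      rw [Int.sign_eq_one_of_pos hx, Int.sign_eq_one_of_pos hy]

lemma mutB_skew {W : Type*} [DecidableEq W] (k : W) (M : W → W → ℤ)
    (h : ∀ x y, M y x = -M x y) (x y : W) : mutB k M y x = -mutB k M x y := by
  unfold mutB
  by_cases hc : x = k ∨ y = k
  · rw [if_pos hc, if_pos (Or.symm hc), h]
  · rw [if_neg hc, if_neg (fun hc' => hc (Or.symm hc')), h x y, h k y, h x k, Int.sign_neg]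
    have e1 : (-M k y) * (-M x k) = M x k * M k y := by ring
    rw [e1, neg_mul, sign_mul_max_comm (M x k) (M k y)]
    ring

lemma framed_skew {V : Type*} [DecidableEq V] (B : V → V → ℤ)
    (hskew : ∀ i j, B j i = -B i j) (x y : V ⊕ V) : framed B y x = -framed B x y := by
  rcases x with a | a <;> rcases y with b | b
  · exact hskew a b
  · show (if b = a then -1 else 0) = -(if a = b then 1 else 0)
    rcases eq_or_ne a b with h | h
    · subst h; simp
    · rw [if_neg (Ne.symm h), if_neg h]; ring
  · show (if b = a then 1 else 0) = -(if a = b then -1 else 0)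
    rcases eq_or_ne a b with h | h
    · subst h; simp
    · rw [if_neg (Ne.symm h), if_neg h]; ring
  · show (0:ℤ) = -0
    simp

lemma mutFr_skew {V : Type*} [DecidableEq V] (σ : List V) (M : (V ⊕ V) → (V ⊕ V) → ℤ)
    (h : ∀ x y, M y x = -M x y) : ∀ x y, mutFr σ M y x = -mutFr σ M x y := by
  induction σ generalizing M with
  | nil => exact h
  | cons a l ih => exact ih _ (mutB_skew _ _ h)

lemma mutFr_concat {V : Type*} [DecidableEq V] (l : List V) (k : V)
    (M : (V ⊕ V) → (V ⊕ V) → ℤ) : mutFr (l ++ [k]) M = mutB (Sum.inl k) (mutFr l M) := by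
  simp [mutFr, List.foldl_append]

lemma green_row_nonzero {W : Type*} [DecidableEq W] (B' : W → W → ℤ) (σ' : List W)
    (hg : ∀ s (h : s < σ'.length), IsGreen (mutFr (σ'.take s) (framed B')) (σ'[s]'h))
    (t : ℕ) (ht : t ≤ σ'.length) (v : W) :
    ∃ f, mutFr (σ'.take t) (framed B') (Sum.inl v) (Sum.inr f) ≠ 0 := by
  classical
  set K : Finset W := insert v σ'.toFinset with hK
  have hvK : v ∈ K := Finset.mem_insert_self _ _
  set Cm : ℕ → Matrix K K ℤ :=
    fun t a b => mutFr (σ'.take t) (framed B') (Sum.inl a.1) (Sum.inr b.1) with hCm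
  have key : ∀ t, t ≤ σ'.length → IsUnit (Cm t) := by
    intro t
    induction t with
    | zero =>
      intro _
      have : Cm 0 = 1 := by
        ext a b
        show framed B' (Sum.inl a.1) (Sum.inr b.1) = _
        show (if a.1 = b.1 then (1:ℤ) else 0) = _
        rw [Matrix.one_apply]
        by_cases h : a = b
        · subst h; simp
        · rw [if_neg h, if_neg (fun h' => h (Subtype.ext h'))]
      rw [this]; exact isUnit_one
    | succ t ih =>
      intro h
      have ht' : t < σ'.length := h
      have hkK : σ'[t] ∈ K := Finset.mem_insert_of_mem (List.mem_toFinset.2 (List.getElem_mem ht'))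
      set kK : K := ⟨σ'[t], hkK⟩ with hkKdef
      set Mt := mutFr (σ'.take t) (framed B') with hMt
      set w : K → ℤ := fun a => if a = kK then -2 else max (Mt (Sum.inl a.1) (Sum.inl σ'[t])) 0
        with hw
      set E : Matrix K K ℤ := fun a g => (if g = a then 1 else 0) + (if g = kK then w a else 0)
        with hE
      have hEapp : ∀ a g : K, E a g = (if g = a then 1 else 0) + (if g = kK then w a else 0) := by
        intro a g; rw [hE]
      have hsum : ∀ (a : K) (X : K → ℤ), (∑ g, E a g * X g) = X a + w a * X kK := by
        intro a X
        have hterm : ∀ g : K, E a g * X g =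
            (if g = a then X g else 0) + (if g = kK then w a * X g else 0) := by
          intro g
          rw [hEapp]
          by_cases h1 : g = a <;> by_cases h2 : g = kK
          · rw [if_pos h1, if_pos h2, if_pos h1, if_pos h2]; ring
          · rw [if_pos h1, if_neg h2, if_pos h1, if_neg h2]; ring
          · rw [if_neg h1, if_pos h2, if_neg h1, if_pos h2]; ring
          · rw [if_neg h1, if_neg h2, if_neg h1, if_neg h2]; ring
        rw [Finset.sum_congr rfl (fun g _ => hterm g), Finset.sum_add_distrib]
        simp [Finset.sum_ite_eq, Finset.sum_ite_eq']
      have hwkK : w kK = -2 := by simp only [hw]; simp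
      have hEE : E * E = 1 := by
        ext a b
        rw [Matrix.mul_apply, hsum a (fun g => E g b), Matrix.one_apply]
        have hEkb : E kK b = -(if b = kK then 1 else 0) := by
          rw [hEapp]
          by_cases hb : b = kK
          · rw [if_pos hb, if_pos hb, hwkK]; ring
          · rw [if_neg hb, if_neg hb]; ring
        rw [hEkb, hEapp]
        by_cases h1 : b = a <;> by_cases h2 : b = kK
        · rw [if_pos h1, if_pos h2, if_pos h2, if_pos h1.symm]; ring
        · rw [if_pos h1, if_neg h2, if_neg h2, if_pos h1.symm]; ring
        · rw [if_neg h1, if_pos h2, if_pos h2, if_neg fun h => h1 h.symm]; ring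
        · rw [if_neg h1, if_neg h2, if_neg h2, if_neg fun h => h1 h.symm]; ring
      have hstep : Cm (t+1) = E * Cm t := by
        ext a b
        rw [Matrix.mul_apply, hsum a (fun g => Cm t g b)]
        have htake : σ'.take (t+1) = σ'.take t ++ [σ'[t]] := by
          rw [List.take_succ, List.getElem?_eq_getElem ht']; rfl
        have hmut : Cm (t+1) a b = mutB (Sum.inl σ'[t]) Mt (Sum.inl a.1) (Sum.inr b.1) := by
          rw [hCm]; simp only [htake, mutFr_concat, hMt]
        rw [hmut]
        unfold mutB
        by_cases ha : a = kK
        · have h5 : (Sum.inl a.1 : W ⊕ W) = Sum.inl σ'[t] := by rw [ha]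
          rw [if_pos (Or.inl h5), h5]
          have h6 : Cm t a b = Mt (Sum.inl σ'[t]) (Sum.inr b.1) := by rw [ha]
          have hwa : w a = -2 := by rw [ha, hwkK]
          have h7 : Cm t kK b = Mt (Sum.inl σ'[t]) (Sum.inr b.1) := rfl
          rw [h6, hwa, h7]; ring
        · have hne : ¬((Sum.inl a.1 : W ⊕ W) = Sum.inl σ'[t] ∨ (Sum.inr b.1 : W ⊕ W) = Sum.inl σ'[t]) := by
            rintro (h' | h')
            · exact ha (Subtype.ext (Sum.inl.inj h'))
            · exact Sum.inr_ne_inl h'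
          rw [if_neg hne]
          have hc : 0 ≤ Mt (Sum.inl σ'[t]) (Sum.inr b.1) := hg t ht' b.1
          rw [sign_mul_max_of_nonneg _ _ hc]
          have h1 : Cm t a b = Mt (Sum.inl a.1) (Sum.inr b.1) := rfl
          have h2 : Cm t kK b = Mt (Sum.inl σ'[t]) (Sum.inr b.1) := rfl
          have hwa : w a = max (Mt (Sum.inl a.1) (Sum.inl σ'[t])) 0 := by
            simp only [hw]; rw [if_neg ha]
          rw [h1, h2, hwa]
      rw [hstep]
      exact ((⟨E, E, hEE, hEE⟩ : Units (Matrix K K ℤ)).isUnit).mul (ih ht'.le)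
  by_contra hcon
  push_neg at hcon
  obtain ⟨u, hu⟩ := key t ht
  have hone : Cm t * (↑u⁻¹ : Matrix K K ℤ) = 1 := by rw [← hu]; exact u.mul_inv
  have h0 : (Cm t * (↑u⁻¹ : Matrix K K ℤ)) ⟨v, hvK⟩ ⟨v, hvK⟩ = 0 := by
    rw [Matrix.mul_apply]
    apply Finset.sum_eq_zero
    intro g _
    have : Cm t ⟨v, hvK⟩ g = 0 := hcon g.1
    rw [this, zero_mul]
  rw [hone, Matrix.one_apply_eq] at h0
  exact one_ne_zero h0

lemma mutB_ne {W : Type*} [DecidableEq W] {k x y : W} (M : W → W → ℤ) (hx : x ≠ k) (hy : y ≠ k) :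
    mutB k M x y = M x y + Int.sign (M x k) * max (M x k * M k y) 0 := by
  unfold mutB; rw [if_neg]; rintro (h | h); exacts [hx h, hy h]

lemma mutB_left {W : Type*} [DecidableEq W] (k y : W) (M : W → W → ℤ) :
    mutB k M k y = -M k y := by
  unfold mutB; rw [if_pos (Or.inl rfl)]

lemma mutB_right {W : Type*} [DecidableEq W] (k x : W) (M : W → W → ℤ) :
    mutB k M x k = -M x k := by
  unfold mutB; rw [if_pos (Or.inr rfl)]

lemma filter_take_fact {V ι : Type*} (π : V → ι) {β : Type*}
    (L : List β) (g : β → V) (τ : List V) (p : V → Bool)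
    (hshuf : τ.filter p = L.map g) (t : ℕ) :
    (τ.take t).filter p = (L.take (((τ.take t).filter p).length)).map g ∧
      ((τ.take t).filter p).length ≤ L.length := by
  have hpre : (τ.take t).filter p <+: L.map g := hshuf ▸ (List.take_prefix t τ).filter p
  have heq := List.prefix_iff_eq_take.1 hpre
  constructor
  · conv_lhs => rw [heq]
    exact List.map_take.symm
  · have := hpre.length_le
    rwa [List.length_map] at this

lemma shuffle_facts {V ι : Type*} [DecidableEq V] [DecidableEq ι] (π : V → ι)
    (σ : (i : ι) → List {v : V // π v = i}) (τ : List V)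
    (hshuf : ∀ i, τ.filter (fun v => decide (π v = i)) = (σ i).map Subtype.val)
    (t : ℕ) (ht : t < τ.length) :
    ∃ hs : ((τ.take t).filter (fun v => decide (π v = π (τ[t]'ht)))).length
        < (σ (π (τ[t]'ht))).length,
      ((σ (π (τ[t]'ht)))[((τ.take t).filter
          (fun v => decide (π v = π (τ[t]'ht)))).length]'hs).1 = τ[t]'ht ∧
      ((τ.take (t+1)).filter (fun v => decide (π v = π (τ[t]'ht)))).length
        = ((τ.take t).filter (fun v => decide (π v = π (τ[t]'ht)))).length + 1 := by
  have htake : τ.take (t+1) = τ.take t ++ [τ[t]'ht] := by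
    rw [List.take_succ, List.getElem?_eq_getElem ht]; rfl
  have hfilt : (τ.take (t+1)).filter (fun v => decide (π v = π (τ[t]'ht)))
      = (τ.take t).filter (fun v => decide (π v = π (τ[t]'ht))) ++ [τ[t]'ht] := by
    rw [htake, List.filter_append]
    congr 1
    simp
  have hfi0 := filter_take_fact π (σ (π (τ[t]'ht))) Subtype.val τ
    (fun v => decide (π v = π (τ[t]'ht))) (hshuf (π (τ[t]'ht))) t
  have hfi0' := filter_take_fact π (σ (π (τ[t]'ht))) Subtype.val τ
    (fun v => decide (π v = π (τ[t]'ht))) (hshuf (π (τ[t]'ht))) (t+1)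
  have hlen1 : ((τ.take (t+1)).filter (fun v => decide (π v = π (τ[t]'ht)))).length
      = ((τ.take t).filter (fun v => decide (π v = π (τ[t]'ht)))).length + 1 := by
    rw [hfilt, List.length_append]; rfl
  have hs : ((τ.take t).filter (fun v => decide (π v = π (τ[t]'ht)))).length
      < (σ (π (τ[t]'ht))).length := by
    have h2 := hfi0'.2; rw [hlen1] at h2; exact h2
  refine ⟨hs, ?_, hlen1⟩
  have e1 := hfi0'.1
  rw [hlen1] at e1
  have htakeσ : (σ (π (τ[t]'ht))).take
        (((τ.take t).filter (fun v => decide (π v = π (τ[t]'ht)))).length + 1)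
      = (σ (π (τ[t]'ht))).take (((τ.take t).filter (fun v => decide (π v = π (τ[t]'ht)))).length)
        ++ [(σ (π (τ[t]'ht)))[((τ.take t).filter
            (fun v => decide (π v = π (τ[t]'ht)))).length]'hs] := by
    rw [List.take_succ, List.getElem?_eq_getElem hs]; rfl
  rw [hfilt, htakeσ, List.map_append, ← hfi0.1] at e1
  have e2 := List.append_cancel_left e1
  injection e2 with e3 _
  exact e3.symm

lemma main_inv {V ι : Type*} [DecidableEq V] [DecidableEq ι]
    (B : V → V → ℤ) (hskew : ∀ i j, B j i = -B i j)
    (π : V → ι) (σ : (i : ι) → List {v : V // π v = i})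
    (hmgs : ∀ i, IsMGS (fun a b : {v : V // π v = i} => B a.1 b.1) (σ i))
    (τ : List V)
    (hshuf : ∀ i, τ.filter (fun v => decide (π v = i)) = (σ i).map Subtype.val)
    (hcp : CompPresSeq π τ (framed B)) :
    ∀ t, t ≤ τ.length →
      (∀ v f, π v ≠ π f → mutFr (τ.take t) (framed B) (Sum.inl v) (Sum.inr f) = 0) ∧
      (∀ i (a b : {v : V // π v = i}),
        mutFr (τ.take t) (framed B) (Sum.inl a.1) (Sum.inl b.1)
          = mutFr ((σ i).take (((τ.take t).filter (fun v => decide (π v = i))).length))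
              (framed (fun a b : {v : V // π v = i} => B a.1 b.1)) (Sum.inl a) (Sum.inl b)) ∧
      (∀ i (a b : {v : V // π v = i}),
        mutFr (τ.take t) (framed B) (Sum.inl a.1) (Sum.inr b.1)
          = mutFr ((σ i).take (((τ.take t).filter (fun v => decide (π v = i))).length))
              (framed (fun a b : {v : V // π v = i} => B a.1 b.1)) (Sum.inl a) (Sum.inr b)) := by
  intro t
  induction t with
  | zero =>
    intro _
    refine ⟨?_, ?_, ?_⟩
    · intro v f hvf
      show (if v = f then (1:ℤ) else 0) = 0
      rw [if_neg (fun h => hvf (congrArg π h))]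
    · intro i a b; rfl
    · intro i a b
      show (if a.1 = b.1 then (1:ℤ) else 0) = (if a = b then (1:ℤ) else 0)
      by_cases h : a = b
      · rw [if_pos (congrArg Subtype.val h), if_pos h]
      · rw [if_neg (fun h' => h (Subtype.ext h')), if_neg h]
  | succ t ih =>
    intro h1t
    have ht' : t < τ.length := h1t
    obtain ⟨IH1, IH2, IH3⟩ := ih ht'.le
    obtain ⟨hs, hgetk, hlen1⟩ := shuffle_facts π σ τ hshuf t ht'
    have htake : τ.take (t+1) = τ.take t ++ [τ[t]'ht'] := by
      rw [List.take_succ, List.getElem?_eq_getElem ht']; rfl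
    have hfeq : ∀ i : ι, π (τ[t]'ht') ≠ i →
        (τ.take (t+1)).filter (fun v => decide (π v = i))
          = (τ.take t).filter (fun v => decide (π v = i)) := by
      intro i hik
      rw [htake, List.filter_append]
      have : [τ[t]'ht'].filter (fun v => decide (π v = i)) = [] := by simp [hik]
      rw [this, List.append_nil]
    set k := τ[t]'ht' with hk
    set n := ((τ.take t).filter (fun v => decide (π v = π k))).length with hn
    set M := mutFr (τ.take t) (framed B) with hM
    set ks := (σ (π k))[n]'hs with hksdef
    set N := mutFr ((σ (π k)).take n)
      (framed (fun a b : {v : V // π v = π k} => B a.1 b.1)) with hNdef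
    have hMstep : mutFr (τ.take (t+1)) (framed B) = mutB (Sum.inl k) M := by
      rw [htake, mutFr_concat]
    have hNstep : mutFr ((σ (π k)).take (n+1))
          (framed (fun a b : {v : V // π v = π k} => B a.1 b.1))
        = mutB (Sum.inl ks) N := by
      have htakeσ : (σ (π k)).take (n+1) = (σ (π k)).take n ++ [ks] := by
        rw [List.take_succ, List.getElem?_eq_getElem hs]; rfl
      rw [htakeσ, mutFr_concat]
    have IH2C : ∀ a b : {v : V // π v = π k},
        M (Sum.inl a.1) (Sum.inl b.1) = N (Sum.inl a) (Sum.inl b) := fun a b => IH2 (π k) a b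
    have IH3C : ∀ a b : {v : V // π v = π k},
        M (Sum.inl a.1) (Sum.inr b.1) = N (Sum.inl a) (Sum.inr b) := fun a b => IH3 (π k) a b
    have hMB : ∀ a : {v : V // π v = π k},
        M (Sum.inl a.1) (Sum.inl k) = N (Sum.inl a) (Sum.inl ks) := by
      intro a; have h0 := IH2C a ks; rwa [hgetk] at h0
    have hMB' : ∀ b : {v : V // π v = π k},
        M (Sum.inl k) (Sum.inl b.1) = N (Sum.inl ks) (Sum.inl b) := by
      intro b; have h0 := IH2C ks b; rwa [hgetk] at h0
    have hMC : ∀ f : {v : V // π v = π k},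
        M (Sum.inl k) (Sum.inr f.1) = N (Sum.inl ks) (Sum.inr f) := by
      intro f; have h0 := IH3C ks f; rwa [hgetk] at h0
    have hgreenC : ∀ f : {v : V // π v = π k}, 0 ≤ N (Sum.inl ks) (Sum.inr f) :=
      (hmgs (π k)).2 n hs
    have hrowg : ∀ f : V, 0 ≤ M (Sum.inl k) (Sum.inr f) := by
      intro f
      by_cases hf : π f = π k
      · exact le_of_le_of_eq (hgreenC ⟨f, hf⟩) (hMC ⟨f, hf⟩).symm
      · exact le_of_eq (IH1 k f (fun h => hf h.symm)).symm
    have hpos : ∃ f, 0 < M (Sum.inl k) (Sum.inr f) := by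
      obtain ⟨f', hf'⟩ := green_row_nonzero (fun a b : {v : V // π v = π k} => B a.1 b.1)
        (σ (π k)) (hmgs (π k)).2 n hs.le ks
      exact ⟨f'.1, lt_of_le_of_ne (hrowg f'.1) (fun h0 => hf' ((hMC f').symm.trans h0.symm))⟩
    have hin : ∀ a, 0 < M (Sum.inl a) (Sum.inl k) → π a = π k := (hcp t ht').1 hpos
    have hskewM : ∀ x y, M y x = -M x y := mutFr_skew _ _ (framed_skew B hskew)
    refine ⟨?_, ?_, ?_⟩
    · -- cross-component C entries stay 0
      intro v f hvf
      rw [hMstep]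
      by_cases hv : v = k
      · subst hv
        rw [mutB_left, IH1 k f hvf, neg_zero]
      · rw [mutB_ne M (fun h => hv (Sum.inl.inj h)) (fun h => Sum.inr_ne_inl h),
          IH1 v f hvf, sign_mul_max_of_nonneg _ _ (hrowg f), zero_add]
        rcases le_or_gt (M (Sum.inl v) (Sum.inl k)) 0 with hx | hx
        · rw [max_eq_right hx, zero_mul]
        · have hc0 : M (Sum.inl k) (Sum.inr f) = 0 :=
            IH1 k f (by rw [← hin v hx]; exact hvf)
          rw [hc0, mul_zero]
    · -- mutable blocks
      intro i a b
      rw [hMstep]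
      by_cases hi : π k = i
      · subst hi
        rw [hlen1, hNstep]
        by_cases ha : a = ks
        · subst ha
          rw [hgetk, mutB_left, mutB_left, hMB' b]
        · by_cases hb : b = ks
          · subst hb
            rw [hgetk, mutB_right, mutB_right, hMB a]
          · rw [mutB_ne M (fun h => ha (Subtype.ext ((Sum.inl.inj h).trans hgetk.symm)))
                (fun h => hb (Subtype.ext ((Sum.inl.inj h).trans hgetk.symm))),
              mutB_ne N (fun h => ha (Sum.inl.inj h)) (fun h => hb (Sum.inl.inj h)),
              IH2C a b, hMB a, hMB' b]
      · rw [hfeq i hi]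
        rw [mutB_ne M (fun h => hi ((congrArg π (Sum.inl.inj h)).symm.trans a.2))
            (fun h => hi ((congrArg π (Sum.inl.inj h)).symm.trans b.2)),
          IH2 i a b, add_eq_left]
        rcases lt_trichotomy (M (Sum.inl a.1) (Sum.inl k)) 0 with hx | hx | hx
        · have hy : 0 ≤ M (Sum.inl k) (Sum.inl b.1) := by
            rcases le_or_gt (M (Sum.inl k) (Sum.inl b.1)) 0 with hy' | hy'
            · rcases eq_or_lt_of_le hy' with hy0 | hy0
              · exact le_of_eq hy0.symm
              · exfalso
                have hbk : 0 < M (Sum.inl b.1) (Sum.inl k) := by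
                  rw [hskewM]; omega
                exact hi ((hin b.1 hbk).symm.trans b.2)
            · exact hy'.le
          have : M (Sum.inl a.1) (Sum.inl k) * M (Sum.inl k) (Sum.inl b.1) ≤ 0 :=
            mul_nonpos_iff.mpr (Or.inr ⟨hx.le, hy⟩)
          rw [max_eq_right this, mul_zero]
        · rw [hx]; simp
        · exact absurd ((hin a.1 hx).symm.trans a.2) hi
    · -- C blocks
      intro i a b
      rw [hMstep]
      by_cases hi : π k = i
      · subst hi
        rw [hlen1, hNstep]
        by_cases ha : a = ks
        · subst ha
          rw [hgetk, mutB_left, mutB_left, hMC b]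
        · rw [mutB_ne M (fun h => ha (Subtype.ext ((Sum.inl.inj h).trans hgetk.symm)))
              (fun h => Sum.inr_ne_inl h),
            mutB_ne N (fun h => ha (Sum.inl.inj h)) (fun h => Sum.inr_ne_inl h),
            IH3C a b, hMB a, hMC b]
      · rw [hfeq i hi]
        have hc0 : M (Sum.inl k) (Sum.inr b.1) = 0 := IH1 k b.1 (fun h => hi (h.trans b.2))
        rw [mutB_ne M (fun h => hi ((congrArg π (Sum.inl.inj h)).symm.trans a.2)) (fun h => Sum.inr_ne_inl h),
          hc0, mul_zero, max_self, mul_zero, add_zero, IH3 i a b]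

/-- a component preserving shuffle of maximal green sequences of
the components is a maximal green sequence for the whole quiver. -/
theorem component_preserving_mgs {V ι : Type*} [DecidableEq V] [DecidableEq ι]
    (B : V → V → ℤ) (hskew : ∀ i j, B j i = -B i j)
    (π : V → ι) (σ : (i : ι) → List {v : V // π v = i})
    (hmgs : ∀ i, IsMGS (fun a b : {v : V // π v = i} => B a.1 b.1) (σ i))
    (τ : List V)
    (hshuf : ∀ i, τ.filter (fun v => decide (π v = i)) = (σ i).map Subtype.val)
    (hcp : CompPresSeq π τ (framed B)) :
    IsMGS B τ := by
  have inv := main_inv B hskew π σ hmgs τ hshuf hcp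
  constructor
  · intro v f
    by_cases hf : π f = π v
    · have h3 := (inv τ.length le_rfl).2.2 (π v) ⟨v, rfl⟩ ⟨f, hf⟩
      rw [List.take_length] at h3
      rw [hshuf (π v), List.length_map, List.take_length] at h3
      exact le_of_eq_of_le h3 ((hmgs (π v)).1 ⟨v, rfl⟩ ⟨f, hf⟩)
    · have h1 := (inv τ.length le_rfl).1 v f (fun h => hf h.symm)
      rw [List.take_length] at h1
      exact le_of_eq h1
  · intro t h f
    obtain ⟨hs, hgetk, -⟩ := shuffle_facts π σ τ hshuf t h
    by_cases hf : π f = π (τ[t]'h)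
    · have h3 := (inv t h.le).2.2 (π (τ[t]'h))
        ((σ (π (τ[t]'h)))[((τ.take t).filter
          (fun v => decide (π v = π (τ[t]'h)))).length]'hs) ⟨f, hf⟩
      rw [hgetk] at h3
      exact le_of_le_of_eq ((hmgs (π (τ[t]'h))).2 _ hs ⟨f, hf⟩) h3.symm
    · exact le_of_eq ((inv t h.le).1 (τ[t]'h) f (fun hh => hf hh.symm)).symm
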